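/- Let f be a strongly hyperbolic function and let 0 < x₁ < x₂, y₂ < y₁ < 0 with 1 < y₂/y₁ < x₂/x₁. Then there exists b₀ > 0 such that (f(x₂+b₀) − f(b₀))/(f(x₁+b₀) − f(b₀)) = y₂/y₁. -/

import Mathlib

open Filter Set Real

/-- A strongly hyperbolic function `f : (0,∞) → (0,∞)`. -/
def StronglyHyperbolic (f : ℝ → ℝ) : Prop :=
  (∀ x ∈ Set.Ioi (0:ℝ), 0 < f x) ∧
  Filter.Tendsto f (nhdsWithin 0 (Set.Ioi 0)) Filter.atTop ∧
  Filter.Tendsto f Filter.atTop (nhds 0) ∧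
  StrictConvexOn ℝ (Set.Ioi 0) f ∧
  (∀ b : ℝ, Filter.Tendsto (fun x => f (x + b) / f x) Filter.atTop (nhds 1)) ∧
  (∀ x ∈ Set.Ioi (0:ℝ), DifferentiableAt ℝ f x) ∧
  StrictConvexOn ℝ (Set.Ioi 0) (fun x => Real.log |deriv f x|)


lemma sh_deriv_neg {f : ℝ → ℝ} (hpos : ∀ x ∈ Set.Ioi (0:ℝ), 0 < f x)
    (htop : Tendsto f atTop (nhds 0))
    (hconv : StrictConvexOn ℝ (Set.Ioi 0) f)
    (hdiff : ∀ x ∈ Set.Ioi (0:ℝ), DifferentiableAt ℝ f x) :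
    ∀ x ∈ Set.Ioi (0:ℝ), deriv f x < 0 := by
  intro x hx
  by_contra hge
  push_neg at hge
  have hkey : ∀ y, x + 1 ≤ y → f x ≤ f y := by
    intro y hy
    have hxy : x < y := by linarith
    have hyS : y ∈ Set.Ioi (0:ℝ) := lt_trans hx hxy
    have h1 := hconv.deriv_lt_slope hx hyS hxy (hdiff x hx)
    have hslope : 0 < slope f x y := lt_of_le_of_lt hge h1
    rw [slope_def_field, lt_div_iff₀ (by linarith : (0:ℝ) < y - x)] at hslope
    linarith
  have : (0:ℝ) ≤ 0 → f x ≤ 0 := fun _ => ge_of_tendsto htop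
    (by filter_upwards [eventually_ge_atTop (x+1)] with y hy using hkey y hy)
  linarith [hpos x hx, this le_rfl]

lemma sh_anti {f : ℝ → ℝ} (hpos : ∀ x ∈ Set.Ioi (0:ℝ), 0 < f x)
    (htop : Tendsto f atTop (nhds 0))
    (hconv : StrictConvexOn ℝ (Set.Ioi 0) f)
    (hdiff : ∀ x ∈ Set.Ioi (0:ℝ), DifferentiableAt ℝ f x) :
    ∀ a ∈ Set.Ioi (0:ℝ), ∀ b ∈ Set.Ioi (0:ℝ), a < b → f b < f a := by
  intro a ha b hb hab
  have h1 := hconv.slope_lt_deriv ha hb hab (hdiff b hb)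
  have h2 := sh_deriv_neg hpos htop hconv hdiff b hb
  rw [slope_def_field] at h1
  have h3 : (f b - f a) / (b - a) < 0 := lt_trans h1 h2
  rw [div_lt_iff₀ (by linarith : (0:ℝ) < b - a)] at h3
  linarith

lemma sh_grad {f : ℝ → ℝ} (hconv : StrictConvexOn ℝ (Set.Ioi 0) f)
    (hdiff : ∀ x ∈ Set.Ioi (0:ℝ), DifferentiableAt ℝ f x)
    {x s : ℝ} (hx : 0 < x) (hs : 0 < s) :
    s * deriv f x ≤ f (x + s) - f x ∧ f (x + s) - f x ≤ s * deriv f (x + s) := by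
  have hxs : x + s ∈ Set.Ioi (0:ℝ) := by simp; linarith
  have hxS : x ∈ Set.Ioi (0:ℝ) := hx
  have hlt : x < x + s := by linarith
  have h1 := hconv.convexOn.deriv_le_slope hxS hxs hlt (hdiff x hxS)
  have h2 := hconv.convexOn.slope_le_deriv hxS hxs hlt (hdiff _ hxs)
  rw [slope_def_field, add_sub_cancel_left] at h1 h2
  constructor
  · have := mul_le_mul_of_nonneg_right h1 hs.le
    rwa [div_mul_cancel₀ _ hs.ne', mul_comm] at this
  · have := mul_le_mul_of_nonneg_right h2 hs.le
    rwa [div_mul_cancel₀ _ hs.ne', mul_comm (deriv f (x+s))] at this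

lemma convexOn_add_sub_mono {φ : ℝ → ℝ} (hc : ConvexOn ℝ (Set.Ioi 0) φ)
    {s x y : ℝ} (hs : 0 < s) (hx : 0 < x) (hxy : x ≤ y) :
    φ (x + s) - φ x ≤ φ (y + s) - φ y := by
  rcases eq_or_lt_of_le hxy with rfl | hlt
  · exact le_rfl
  have hy : 0 < y := lt_trans hx hlt
  have hxs : x + s ∈ Set.Ioi 0 \ {x} := ⟨by simp; linarith, by simp; linarith⟩
  have hys : y + s ∈ Set.Ioi 0 \ {x} := ⟨by simp; linarith, by simp; linarith⟩
  have h1 : slope φ x (x + s) ≤ slope φ x (y + s) :=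
    hc.slope_mono hx hxs hys (by linarith)
  have hxm : x ∈ Set.Ioi 0 \ {y + s} := ⟨hx, by simp; linarith⟩
  have hym : y ∈ Set.Ioi 0 \ {y + s} := ⟨hy, by simp; linarith⟩
  have h2 : slope φ (y + s) x ≤ slope φ (y + s) y :=
    hc.slope_mono (by simp; linarith : y + s ∈ Set.Ioi (0:ℝ)) hxm hym hxy
  have h3 : slope φ x (x + s) ≤ slope φ y (y + s) := by
    calc slope φ x (x + s) ≤ slope φ x (y + s) := h1
      _ = slope φ (y + s) x := slope_comm φ x (y + s)
      _ ≤ slope φ (y + s) y := h2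
      _ = slope φ y (y + s) := slope_comm φ (y + s) y
  rw [slope_def_field, slope_def_field, add_sub_cancel_left, add_sub_cancel_left] at h3
  have := mul_le_mul_of_nonneg_right h3 hs.le
  rwa [div_mul_cancel₀ _ hs.ne', div_mul_cancel₀ _ hs.ne'] at this

lemma sh_decay_absurd {f : ℝ → ℝ} {s c : ℝ}
    (hpos : ∀ x ∈ Set.Ioi (0:ℝ), 0 < f x)
    (htop : Tendsto f atTop (nhds 0))
    (hconv : StrictConvexOn ℝ (Set.Ioi 0) f)
    (hdiff : ∀ x ∈ Set.Ioi (0:ℝ), DifferentiableAt ℝ f x)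
    (hratio : Tendsto (fun x => f (x + s) / f x) atTop (nhds 1))
    (hs : 0 < s) (hc0 : 0 < c) (hc1 : c < 1)
    (hdec : ∀ x, 1 ≤ x → -deriv f (x + s) ≤ c * (-deriv f x)) : False := by
  have hd := sh_deriv_neg hpos htop hconv hdiff
  have h1c : (0:ℝ) < 1 - c := by linarith
  have hstep : ∀ u, 1 ≤ u → f u - f (u + s) ≤ s * (-deriv f u) := fun u hu => by
    have := (sh_grad hconv hdiff (by linarith : (0:ℝ) < u) hs).1; linarith
  have hstep2 : ∀ u, 1 ≤ u → s * (-deriv f (u + s)) ≤ f u - f (u + s) := fun u hu => by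
    have := (sh_grad hconv hdiff (by linarith : (0:ℝ) < u) hs).2; linarith
  have hgeom : ∀ (n : ℕ) (x : ℝ), 1 ≤ x → -deriv f (x + n * s) ≤ c ^ n * (-deriv f x) := by
    intro n
    induction n with
    | zero => intro x hx; simp
    | succ n ih =>
      intro x hx
      have hns : (0:ℝ) ≤ (n:ℝ) * s := by positivity
      have e : x + ((n:ℕ)+1:ℝ) * s = (x + n * s) + s := by ring
      have e' : ((n+1:ℕ):ℝ) = (n:ℝ) + 1 := by push_cast; ring
      rw [e', e]
      calc -deriv f ((x + n*s) + s) ≤ c * (-deriv f (x + n*s)) := hdec _ (by linarith)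
        _ ≤ c * (c ^ n * (-deriv f x)) := by
            exact mul_le_mul_of_nonneg_left (ih x hx) hc0.le
        _ = c ^ (n+1) * (-deriv f x) := by ring
  have htel : ∀ (n : ℕ) (x : ℝ), 1 ≤ x →
      f x - f (x + n * s) ≤ s * (-deriv f x) * (1 - c ^ n) / (1 - c) := by
    intro n
    induction n with
    | zero => intro x hx; simp
    | succ n ih =>
      intro x hx
      have hns : (0:ℝ) ≤ (n:ℝ) * s := by positivity
      have e' : ((n+1:ℕ):ℝ) = (n:ℝ) + 1 := by push_cast; ring
      have e : x + ((n:ℝ)+1) * s = (x + n * s) + s := by ring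
      rw [e', e]
      have A := ih x hx
      have B := hstep (x + n * s) (by linarith)
      have G := hgeom n x hx
      have hBG : f (x + n*s) - f ((x + n*s) + s) ≤ s * (c ^ n * (-deriv f x)) :=
        B.trans (mul_le_mul_of_nonneg_left G hs.le)
      have hid : s * (-deriv f x) * (1 - c ^ n) / (1 - c) + s * (c ^ n * (-deriv f x))
          = s * (-deriv f x) * (1 - c ^ (n+1)) / (1 - c) := by
        field_simp
        ring
      linarith
  have hbound : ∀ x, 1 ≤ x → f x ≤ s * (-deriv f x) / (1 - c) := by
    intro x hx
    have hDpos : 0 < -deriv f x := by have := hd x (by simp; linarith); linarith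
    have hlim : Tendsto (fun n : ℕ => f (x + n * s)) atTop (nhds 0) := by
      apply htop.comp
      exact tendsto_atTop_add_const_left atTop x
        (tendsto_natCast_atTop_atTop.atTop_mul_const hs)
    have : f x - s * (-deriv f x) / (1 - c) ≤ 0 := by
      refine ge_of_tendsto hlim (Eventually.of_forall fun n => ?_)
      have h1 := htel n x hx
      have h2 : s * (-deriv f x) * (1 - c ^ n) / (1 - c) ≤ s * (-deriv f x) / (1 - c) := by
        rw [div_le_div_iff₀ h1c h1c]
        nlinarith [mul_nonneg (mul_nonneg (mul_nonneg hs.le hDpos.le) h1c.le) (pow_nonneg hc0.le n)]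
      linarith
    linarith
  have h2c : (0:ℝ) < 2 - c := by linarith
  have hlt1 : 1 / (2 - c) < 1 := by rw [div_lt_one h2c]; linarith
  have hev : ∀ᶠ x in atTop, 1 / (2 - c) < f (x + s) / f x :=
    hratio.eventually (eventually_gt_nhds hlt1)
  obtain ⟨x, hgt, hx1⟩ := (hev.and (eventually_ge_atTop (1:ℝ))).exists
  have hfx : 0 < f x := hpos x (by simp; linarith)
  have hfxs : 0 < f (x + s) := hpos (x+s) (by simp; linarith)
  have B := hstep2 x hx1
  have C := hbound (x + s) (by linarith)
  have C' : f (x + s) * (1 - c) ≤ s * (-deriv f ((x + s))) := by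
    rw [div_eq_mul_inv] at C
    have := mul_le_mul_of_nonneg_right C h1c.le
    rwa [mul_assoc, inv_mul_cancel₀ h1c.ne', mul_one] at this
  have hkey : (2 - c) * f (x + s) ≤ f x := by nlinarith
  have : f (x + s) / f x ≤ 1 / (2 - c) := by
    rw [div_le_div_iff₀ hfx h2c]
    linarith
  linarith


lemma sh_hratio {f : ℝ → ℝ} {s : ℝ}
    (hpos : ∀ x ∈ Set.Ioi (0:ℝ), 0 < f x)
    (htop : Tendsto f atTop (nhds 0))
    (hconv : StrictConvexOn ℝ (Set.Ioi 0) f)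
    (hratio : ∀ b : ℝ, Tendsto (fun x => f (x + b) / f x) atTop (nhds 1))
    (hdiff : ∀ x ∈ Set.Ioi (0:ℝ), DifferentiableAt ℝ f x)
    (hlog : StrictConvexOn ℝ (Set.Ioi 0) (fun x => Real.log |deriv f x|))
    (hs : 0 < s) :
    Tendsto (fun x => (-deriv f (x + s)) / (-deriv f x)) atTop (nhds 1) := by
  have hd := sh_deriv_neg hpos htop hconv hdiff
  have habs : ∀ x ∈ Set.Ioi (0:ℝ), |deriv f x| = -deriv f x := fun x hx =>
    abs_of_neg (hd x hx)
  have hdpos : ∀ x ∈ Set.Ioi (0:ℝ), 0 < -deriv f x := fun x hx => by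
    have := hd x hx; linarith
  have hmono : MonotoneOn (deriv f) (Set.Ioi 0) := hconv.convexOn.monotoneOn_deriv hdiff
  set φ : ℝ → ℝ := fun x => Real.log |deriv f x| with hφ
  set q : ℝ → ℝ := fun x => φ (x + s) - φ x with hq
  set Q : ℝ → ℝ := fun x => q (max x 1) with hQdef
  have hmem : ∀ x : ℝ, 1 ≤ x → x ∈ Set.Ioi (0:ℝ) := fun x hx => by simp; linarith
  have hmems : ∀ x : ℝ, 1 ≤ x → x + s ∈ Set.Ioi (0:ℝ) := fun x hx => by simp; linarith
  have hq0 : ∀ x, 1 ≤ x → q x ≤ 0 := by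
    intro x hx
    have h1 : deriv f x ≤ deriv f (x + s) :=
      hmono (hmem x hx) (hmems x hx) (by linarith)
    have h2 : -deriv f (x + s) ≤ -deriv f x := by linarith
    have : φ (x + s) ≤ φ x := by
      simp only [hφ, habs _ (hmems x hx), habs _ (hmem x hx)]
      exact Real.log_le_log (hdpos _ (hmems x hx)) h2
    simp only [hq]; linarith
  have hQmono : Monotone Q := by
    intro a b hab
    exact convexOn_add_sub_mono hlog.convexOn hs (by positivity : (0:ℝ) < max a 1)
      (max_le_max hab le_rfl)
  have hbdd : BddAbove (Set.range Q) := ⟨0, by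
    rintro _ ⟨x, rfl⟩
    exact hq0 _ (le_max_right x 1)⟩
  set L := ⨆ x, Q x with hL
  have hQtend : Tendsto Q atTop (nhds L) := tendsto_atTop_ciSup hQmono hbdd
  have hLle : ∀ x, Q x ≤ L := fun x => le_ciSup hbdd x
  have hL0 : L ≤ 0 := ciSup_le fun x => hq0 _ (le_max_right x 1)
  have hLzero : L = 0 := by
    by_contra hne
    have hLneg : L < 0 := lt_of_le_of_ne hL0 hne
    have hc1 : Real.exp L < 1 := Real.exp_lt_one_iff.mpr hLneg
    refine sh_decay_absurd hpos htop hconv hdiff (hratio s) hs (Real.exp_pos L) hc1 ?_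
    intro x hx
    have hqx : q x ≤ L := by
      have h := hLle x
      have h2 : q (max x 1) ≤ L := h
      rwa [max_eq_left hx] at h2
    have hlog2 : Real.log (-deriv f (x + s)) - Real.log (-deriv f x) ≤ L := by
      have e1 := habs _ (hmems x hx); have e2 := habs _ (hmem x hx)
      simpa only [hq, hφ, e1, e2] using hqx
    have h3 : Real.log (-deriv f (x + s)) ≤ L + Real.log (-deriv f x) := by linarith
    calc -deriv f (x + s) = Real.exp (Real.log (-deriv f (x + s))) :=
          (Real.exp_log (hdpos _ (hmems x hx))).symm
      _ ≤ Real.exp (L + Real.log (-deriv f x)) := Real.exp_le_exp.mpr h3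
      _ = Real.exp L * (-deriv f x) := by
          rw [Real.exp_add, Real.exp_log (hdpos _ (hmem x hx))]
  rw [hLzero] at hQtend
  have hqtend : Tendsto q atTop (nhds 0) := by
    refine hQtend.congr' ?_
    filter_upwards [eventually_ge_atTop (1:ℝ)] with x hx
    show q (max x 1) = q x
    rw [max_eq_left hx]
  have hexp : Tendsto (fun x => Real.exp (q x)) atTop (nhds 1) := by
    simpa using hqtend.rexp
  refine hexp.congr' ?_
  filter_upwards [eventually_ge_atTop (1:ℝ)] with x hx
  have e1 := habs _ (hmems x hx); have e2 := habs _ (hmem x hx)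
  simp only [hq, hφ, e1, e2]
  rw [Real.exp_sub, Real.exp_log (hdpos _ (hmems x hx)), Real.exp_log (hdpos _ (hmem x hx))]


lemma flip_div (X Y c : ℝ) : (X - c) / (Y - c) = (c - X) / (c - Y) := by
  rw [← neg_div_neg_eq, neg_sub, neg_sub]

lemma sh_glimit_top {f : ℝ → ℝ} {x₁ x₂ : ℝ}
    (hpos : ∀ x ∈ Set.Ioi (0:ℝ), 0 < f x)
    (htop : Tendsto f atTop (nhds 0))
    (hconv : StrictConvexOn ℝ (Set.Ioi 0) f)
    (hratio : ∀ b : ℝ, Tendsto (fun x => f (x + b) / f x) atTop (nhds 1))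
    (hdiff : ∀ x ∈ Set.Ioi (0:ℝ), DifferentiableAt ℝ f x)
    (hlog : StrictConvexOn ℝ (Set.Ioi 0) (fun x => Real.log |deriv f x|))
    (h1 : 0 < x₁) (h12 : x₁ < x₂) :
    Tendsto (fun b => (f (x₂ + b) - f b) / (f (x₁ + b) - f b)) atTop (nhds (x₂ / x₁)) := by
  have h2 : 0 < x₂ := lt_trans h1 h12
  have hd := sh_deriv_neg hpos htop hconv hdiff
  have hdpos : ∀ x ∈ Set.Ioi (0:ℝ), 0 < -deriv f x := fun x hx => by
    have := hd x hx; linarith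
  have hH2 := sh_hratio hpos htop hconv hratio hdiff hlog h2
  have hH1 := sh_hratio hpos htop hconv hratio hdiff hlog h1
  have hlow : Tendsto (fun b => (x₂ / x₁) * ((-deriv f (b + x₂)) / (-deriv f b)))
      atTop (nhds (x₂ / x₁)) := by
    simpa using hH2.const_mul (x₂ / x₁)
  have hupper : Tendsto (fun b => (x₂ / x₁) * ((-deriv f (b + x₁)) / (-deriv f b))⁻¹)
      atTop (nhds (x₂ / x₁)) := by
    have := (hH1.inv₀ one_ne_zero).const_mul (x₂ / x₁)
    simpa using this
  refine tendsto_of_tendsto_of_tendsto_of_le_of_le' hlow hupper ?_ ?_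
  · filter_upwards [eventually_ge_atTop (1:ℝ)] with b hb
    have hbm : b ∈ Set.Ioi (0:ℝ) := by simp; linarith
    have hb1 : b + x₁ ∈ Set.Ioi (0:ℝ) := by simp; linarith
    have hb2 : b + x₂ ∈ Set.Ioi (0:ℝ) := by simp; linarith
    have g1 := sh_grad hconv hdiff (show (0:ℝ) < b by linarith) h2
    have g2 := sh_grad hconv hdiff (show (0:ℝ) < b by linarith) h1
    have hN1 : x₂ * (-deriv f (b + x₂)) ≤ f b - f (b + x₂) := by nlinarith [g1.2]
    have hD2 : f b - f (b + x₁) ≤ x₁ * (-deriv f b) := by nlinarith [g2.1]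
    have hDpos : 0 < f b - f (b + x₁) :=
      lt_of_lt_of_le (mul_pos h1 (hdpos _ hb1)) (by nlinarith [g2.2])
    have hNpos : 0 < f b - f (b + x₂) :=
      lt_of_lt_of_le (mul_pos h2 (hdpos _ hb2)) hN1
    rw [add_comm x₂ b, add_comm x₁ b, flip_div, div_mul_div_comm]
    exact div_le_div₀ hNpos.le hN1 hDpos hD2
  · filter_upwards [eventually_ge_atTop (1:ℝ)] with b hb
    have hbm : b ∈ Set.Ioi (0:ℝ) := by simp; linarith
    have hb1 : b + x₁ ∈ Set.Ioi (0:ℝ) := by simp; linarith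
    have hb2 : b + x₂ ∈ Set.Ioi (0:ℝ) := by simp; linarith
    have g1 := sh_grad hconv hdiff (show (0:ℝ) < b by linarith) h2
    have g2 := sh_grad hconv hdiff (show (0:ℝ) < b by linarith) h1
    have hN2 : f b - f (b + x₂) ≤ x₂ * (-deriv f b) := by nlinarith [g1.1]
    have hD1 : x₁ * (-deriv f (b + x₁)) ≤ f b - f (b + x₁) := by nlinarith [g2.2]
    have hD1pos : 0 < x₁ * (-deriv f (b + x₁)) := mul_pos h1 (hdpos _ hb1)
    rw [add_comm x₂ b, add_comm x₁ b, flip_div, inv_div, div_mul_div_comm]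
    exact div_le_div₀ (mul_pos h2 (hdpos _ hbm)).le hN2 hD1pos hD1


lemma sh_glimit_zero {f : ℝ → ℝ} {x₁ x₂ : ℝ}
    (hpos : ∀ x ∈ Set.Ioi (0:ℝ), 0 < f x)
    (h0 : Tendsto f (nhdsWithin 0 (Set.Ioi 0)) atTop)
    (htop : Tendsto f atTop (nhds 0))
    (hconv : StrictConvexOn ℝ (Set.Ioi 0) f)
    (hdiff : ∀ x ∈ Set.Ioi (0:ℝ), DifferentiableAt ℝ f x)
    (h1 : 0 < x₁) (h12 : x₁ < x₂) :
    Tendsto (fun b => (f (x₂ + b) - f b) / (f (x₁ + b) - f b))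
      (nhdsWithin 0 (Set.Ioi 0)) (nhds 1) := by
  have h2 : 0 < x₂ := lt_trans h1 h12
  have hbase : Tendsto (fun b : ℝ => b) (nhdsWithin (0:ℝ) (Set.Ioi 0)) (nhds 0) :=
    tendsto_id.mono_left nhdsWithin_le_nhds
  have hshift : ∀ c : ℝ, 0 < c →
      Tendsto (fun b : ℝ => f (c + b)) (nhdsWithin 0 (Set.Ioi 0)) (nhds (f c)) := by
    intro c hc
    have hcont : ContinuousAt f c := (hdiff c hc).continuousAt
    have : Tendsto (fun b : ℝ => c + b) (nhdsWithin (0:ℝ) (Set.Ioi 0)) (nhds c) := by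
      simpa using (tendsto_const_nhds.add hbase)
    exact hcont.tendsto.comp this
  have hinv : Tendsto (fun b => (f b)⁻¹) (nhdsWithin (0:ℝ) (Set.Ioi 0)) (nhds 0) :=
    h0.inv_tendsto_atTop
  have hA : Tendsto (fun b => f (x₂ + b) / f b) (nhdsWithin (0:ℝ) (Set.Ioi 0)) (nhds 0) := by
    have := (hshift x₂ h2).mul hinv
    simpa [div_eq_mul_inv] using this
  have hB : Tendsto (fun b => f (x₁ + b) / f b) (nhdsWithin (0:ℝ) (Set.Ioi 0)) (nhds 0) := by
    have := (hshift x₁ h1).mul hinv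
    simpa [div_eq_mul_inv] using this
  have hmain : Tendsto (fun b => (f (x₂ + b) / f b - 1) / (f (x₁ + b) / f b - 1))
      (nhdsWithin (0:ℝ) (Set.Ioi 0)) (nhds 1) := by
    have := (hA.sub_const 1).div (hB.sub_const 1) (by norm_num)
    rw [show ((0:ℝ) - 1) / (0 - 1) = 1 by norm_num] at this
    exact this
  refine hmain.congr' ?_
  filter_upwards [self_mem_nhdsWithin] with b hb
  have hbpos : (0:ℝ) < b := hb
  have hfb : 0 < f b := hpos b hb
  rw [div_sub_one hfb.ne', div_sub_one hfb.ne', div_div_div_cancel_right₀ hfb.ne']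


theorem stmt16 (f : ℝ → ℝ) (hf : StronglyHyperbolic f) (x₁ x₂ y₁ y₂ : ℝ)
    (hx1 : 0 < x₁) (hx12 : x₁ < x₂) (hy21 : y₂ < y₁) (hy1 : y₁ < 0)
    (hr1 : 1 < y₂ / y₁) (hr2 : y₂ / y₁ < x₂ / x₁) :
    ∃ b₀ > (0:ℝ), (f (x₂ + b₀) - f b₀) / (f (x₁ + b₀) - f b₀) = y₂ / y₁ := by
  obtain ⟨hpos, h0, htop, hconv, hratio, hdiff, hlog⟩ := hf
  set r := y₂ / y₁ with hrdef
  set g : ℝ → ℝ := fun b => (f (x₂ + b) - f b) / (f (x₁ + b) - f b) with hg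
  have hz := sh_glimit_zero hpos h0 htop hconv hdiff hx1 hx12
  have hevlt : ∀ᶠ b in nhdsWithin (0:ℝ) (Set.Ioi 0), g b < r :=
    hz.eventually (eventually_lt_nhds hr1)
  obtain ⟨a, hga, ha⟩ := (hevlt.and self_mem_nhdsWithin).exists
  have ha0 : (0:ℝ) < a := ha
  have ht := sh_glimit_top hpos htop hconv hratio hdiff hlog hx1 hx12
  have hevgt : ∀ᶠ b in atTop, r < g b := ht.eventually (eventually_gt_nhds hr2)
  obtain ⟨A, hgA, hA⟩ := (hevgt.and (eventually_ge_atTop (a + 1))).exists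
  have haA : a < A := by linarith
  have hsub : Set.Icc a A ⊆ Set.Ioi (0:ℝ) := fun x hx => by
    simp only [Set.mem_Ioi]; have := hx.1; linarith
  have hfc : ContinuousOn f (Set.Ioi (0:ℝ)) := fun x hx =>
    (hdiff x hx).continuousAt.continuousWithinAt
  have hshiftc : ∀ c : ℝ, 0 < c → ContinuousOn (fun b => f (c + b)) (Set.Icc a A) := by
    intro c hc
    refine hfc.comp (Continuous.continuousOn (by continuity)) ?_
    intro x hx
    have := hx.1
    simp only [Set.mem_Ioi]
    linarith
  have hcont : ContinuousOn g (Set.Icc a A) := by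
    refine ContinuousOn.div ?_ ?_ ?_
    · exact (hshiftc x₂ (lt_trans hx1 hx12)).sub (hfc.mono hsub)
    · exact (hshiftc x₁ hx1).sub (hfc.mono hsub)
    · intro b hb
      have hb0 : (0:ℝ) < b := hsub hb
      have : f (x₁ + b) < f b := by
        rw [add_comm]
        exact sh_anti hpos htop hconv hdiff b hb0 (b + x₁) (by simp; linarith)
          (by linarith)
      intro hzero
      have := sub_eq_zero.mp hzero
      linarith [this]
  have hr_mem : r ∈ Set.Icc (g a) (g A) := ⟨hga.le, hgA.le⟩
  obtain ⟨b₀, hb₀, hgb₀⟩ := intermediate_value_Icc haA.le hcont hr_mem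
  exact ⟨b₀, lt_of_lt_of_le ha0 hb₀.1, hgb₀⟩
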